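/- Let m, n, k be integers with m ≥ 1 and 1 ≤ k ≤ n. Then m·n·H_{mn} − n·∑_{i=1}^{m} H_{mn−k·i} ≥ k·(m+1)/2. (This is the lower bound on the expected number of samples T(n,k;m,1) needed to recover one of m files, and it refines the bound k(m+1)/2.) -/

import Mathlib

/-- The `j`-th harmonic number `H_j = ∑_{i=1}^j 1/i`, as a real number. -/
noncomputable def H (j : ℕ) : ℝ := ∑ i ∈ Finset.range j, (1 : ℝ) / (i + 1)

theorem stmt_7 (m n k : ℕ) (hm : 1 ≤ m) (hk : 1 ≤ k) (hkn : k ≤ n) :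
    (m : ℝ) * n * H (m * n) - n * ∑ i ∈ Finset.Icc 1 m, H (m * n - k * i) ≥
      k * (m + 1) / 2 := by
  have hn : 1 ≤ n := hk.trans hkn
  have hmn : (0:ℝ) < (m:ℝ) * n := by
    have : 0 < m := hm
    have : 0 < n := hn
    positivity
  have key : ∀ i ∈ Finset.Icc 1 m,
      ((k:ℝ) * i) / ((m:ℝ) * n) ≤ H (m * n) - H (m * n - k * i) := by
    intro i hi
    obtain ⟨hi1, him⟩ := Finset.mem_Icc.mp hi
    have hle : k * i ≤ m * n := by
      calc k * i ≤ n * m := Nat.mul_le_mul hkn him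
        _ = m * n := Nat.mul_comm n m
    have hsub : H (m * n) - H (m * n - k * i)
        = ∑ j ∈ Finset.Ico (m * n - k * i) (m * n), (1:ℝ)/(j+1) := by
      rw [H, H, Finset.sum_Ico_eq_sub _ (Nat.sub_le _ _)]
    rw [hsub]
    have hb : ∀ j ∈ Finset.Ico (m * n - k * i) (m * n),
        (1:ℝ)/((m:ℝ)*n) ≤ (1:ℝ)/(j+1) := by
      intro j hj
      have hj2 := (Finset.mem_Ico.mp hj).2
      have h1 : ((j:ℝ)+1) ≤ (m:ℝ)*n := by
        have := Nat.succ_le_of_lt hj2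
        exact_mod_cast this
      have h0 : (0:ℝ) < (j:ℝ)+1 := by positivity
      exact one_div_le_one_div_of_le h0 h1
    have hcard := Finset.card_nsmul_le_sum _ _ _ hb
    have hc : (Finset.Ico (m * n - k * i) (m * n)).card = k * i := by
      rw [Nat.card_Ico, Nat.sub_sub_self hle]
    rw [hc] at hcard
    have : ((k*i : ℕ):ℝ) * ((1:ℝ)/((m:ℝ)*n)) ≤ ∑ j ∈ Finset.Ico (m * n - k * i) (m * n), (1:ℝ)/(j+1) := by
      simpa [nsmul_eq_mul] using hcard
    calc ((k:ℝ) * i) / ((m:ℝ) * n) = ((k*i:ℕ):ℝ) * ((1:ℝ)/((m:ℝ)*n)) := by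
          push_cast; ring
      _ ≤ _ := this
  have hsum := Finset.sum_le_sum key
  have hdiff : ∑ i ∈ Finset.Icc 1 m, (H (m * n) - H (m * n - k * i))
      = (m:ℝ) * H (m * n) - ∑ i ∈ Finset.Icc 1 m, H (m * n - k * i) := by
    rw [Finset.sum_sub_distrib, Finset.sum_const, Nat.card_Icc]
    simp
  have hgauss : ∀ M : ℕ, ∑ i ∈ Finset.Icc 1 M, (i:ℝ) = (M:ℝ) * (M + 1) / 2 := by
    intro M
    induction M with
    | zero => simp
    | succ p ih =>
      rw [Finset.sum_Icc_succ_top (by omega), ih]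
      push_cast; ring
  have hlhs : ∑ i ∈ Finset.Icc 1 m, ((k:ℝ) * i) / ((m:ℝ) * n)
      = (k:ℝ) * (m + 1) / (2 * n) := by
    rw [← Finset.sum_div, ← Finset.mul_sum, hgauss m]
    have hm0 : (m:ℝ) ≠ 0 := by positivity
    have hn0 : (n:ℝ) ≠ 0 := by
      have : 0 < n := hn
      positivity
    field_simp
  rw [hdiff, hlhs] at hsum
  have hn0 : (0:ℝ) < n := by exact_mod_cast hn
  rw [ge_iff_le]
  have := mul_le_mul_of_nonneg_left hsum hn0.le
  calc (k:ℝ) * (m + 1) / 2 = (n:ℝ) * ((k:ℝ) * (m + 1) / (2 * n)) := by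
        field_simp
    _ ≤ (n:ℝ) * ((m:ℝ) * H (m * n) - ∑ i ∈ Finset.Icc 1 m, H (m * n - k * i)) := this
    _ = (m:ℝ) * n * H (m * n) - n * ∑ i ∈ Finset.Icc 1 m, H (m * n - k * i) := by ring
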